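/- Let M be a topological space that is the compactly retractive union of a directed family (M_α)_{α∈A} of subspaces with continuous inclusion maps, and let p ∈ M with A_p := {α ∈ A : p ∈ M_α}. Then for each k ≥ 1, the canonical homomorphism from the direct limit of the homotopy groups π_k(M_α, p), α ∈ A_p, to π_k(M, p) (induced by the inclusion maps) is an isomorphism of groups. -/

import Mathlib

open Set Topology.Homotopy

/-- The map on homotopy groups induced by a continuous pointed map. -/
noncomputable def homotopyGroupMap {X Y : Type*} [TopologicalSpace X] [TopologicalSpace Y]
    (N : Type*) (f : C(X, Y)) (x : X) :
    HomotopyGroup N X x → HomotopyGroup N Y (f x) :=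
  Quotient.map
    (fun g => (⟨f.comp g.1, fun z hz => by
        simp only [ContinuousMap.comp_apply, g.2 z hz]⟩ : GenLoop N Y (f x)))
    (fun g₁ g₂ h => Nonempty.map (fun H => H.compContinuousMap f) h)

theorem factor_through {M : Type*} [TopologicalSpace M] {A : Type*}
    (S : A → Set M) (τ : ∀ a, TopologicalSpace (S a))
    (hcr : ∀ K : Set M, IsCompact K → ∃ a, ∃ hKa : K ⊆ S a,
      (inferInstance : TopologicalSpace K) =
        TopologicalSpace.induced (Set.inclusion hKa) (τ a))
    {X : Type*} [TopologicalSpace X] [CompactSpace X] (f : C(X, M)) :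
    ∃ a, ∃ g : X → S a, @Continuous _ _ _ (τ a) g ∧ ∀ x, (g x : M) = f x := by
  obtain ⟨a, hKa, htop⟩ := hcr (Set.range f) (isCompact_range f.continuous)
  refine ⟨a, fun x => Set.inclusion hKa ⟨f x, Set.mem_range_self x⟩, ?_, fun x => rfl⟩
  have h1 : @Continuous (Set.range f) (S a) _ (τ a) (Set.inclusion hKa) :=
    continuous_iff_le_induced.mpr (le_of_eq htop)
  exact h1.comp (f.continuous.codRestrict fun x => Set.mem_range_self x)

/-- For a compactly retractive directed union `M = ⋃ α, M_α` of topological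
spaces (with continuous inclusion maps), and `p ∈ M`, `k = n + 1 ≥ 1`, the
canonical homomorphism from the direct limit of the groups `π_k(M_α, p)` (over
those `α` with `p ∈ M_α`) to `π_k(M, p)` is an isomorphism: every element of
`π_k(M, p)` comes from some step, and two elements of steps that become equal in
`π_k(M, p)` already become equal in some common later step. -/
theorem homotopyGroup_of_compactly_retractive_union
    {M : Type*} [TopologicalSpace M] {A : Type*} [Preorder A] [IsDirected A (· ≤ ·)]
    (S : A → Set M) (hmono : Monotone S) (hunion : ⋃ a, S a = univ)
    (τ : ∀ a, TopologicalSpace (S a))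
    (hincl : ∀ a, @Continuous _ _ (τ a) _ (fun x : S a => (x : M)))
    (hinclab : ∀ a b (hab : a ≤ b), @Continuous _ _ (τ a) (τ b) (Set.inclusion (hmono hab)))
    (hcr : ∀ K : Set M, IsCompact K → ∃ a, ∃ hKa : K ⊆ S a,
      (inferInstance : TopologicalSpace K) =
        TopologicalSpace.induced (Set.inclusion hKa) (τ a))
    (p : M) (n : ℕ) :
    (∀ g : HomotopyGroup (Fin (n + 1)) M p, ∃ a, ∃ ha : p ∈ S a,
      ∃ h : @HomotopyGroup (Fin (n + 1)) (S a) (τ a) ⟨p, ha⟩,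
        @homotopyGroupMap _ _ (τ a) _ (Fin (n + 1))
          (@ContinuousMap.mk _ _ (τ a) _ (fun x : S a => (x : M)) (hincl a)) ⟨p, ha⟩ h = g) ∧
    (∀ a b, ∀ ha : p ∈ S a, ∀ hb : p ∈ S b,
      ∀ x : @HomotopyGroup (Fin (n + 1)) (S a) (τ a) ⟨p, ha⟩,
      ∀ y : @HomotopyGroup (Fin (n + 1)) (S b) (τ b) ⟨p, hb⟩,
      @homotopyGroupMap _ _ (τ a) _ (Fin (n + 1))
          (@ContinuousMap.mk _ _ (τ a) _ (fun x : S a => (x : M)) (hincl a)) ⟨p, ha⟩ x =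
        @homotopyGroupMap _ _ (τ b) _ (Fin (n + 1))
          (@ContinuousMap.mk _ _ (τ b) _ (fun x : S b => (x : M)) (hincl b)) ⟨p, hb⟩ y →
      ∃ c, ∃ hac : a ≤ c, ∃ hbc : b ≤ c,
        @homotopyGroupMap _ _ (τ a) (τ c) (Fin (n + 1))
            (@ContinuousMap.mk _ _ (τ a) (τ c) (Set.inclusion (hmono hac)) (hinclab a c hac))
            ⟨p, ha⟩ x =
          @homotopyGroupMap _ _ (τ b) (τ c) (Fin (n + 1))
            (@ContinuousMap.mk _ _ (τ b) (τ c) (Set.inclusion (hmono hbc)) (hinclab b c hbc))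
            ⟨p, hb⟩ y) := by
  constructor
  · intro g
    obtain ⟨γ, rfl⟩ := Quotient.exists_rep g
    obtain ⟨a, g', hgc, hg⟩ := factor_through S τ hcr γ.1
    have hy0 : (fun _ => (0:unitInterval) : Fin (n+1) → unitInterval) ∈
        Cube.boundary (Fin (n+1)) := ⟨0, Or.inl rfl⟩
    have ha : p ∈ S a := by
      have := (g' (fun _ => 0)).2
      rwa [show ((g' (fun _ => 0) : S a) : M) = p from (hg _).trans (γ.2 _ hy0)] at this
    refine ⟨a, ha, ?_, ?_⟩
    · exact Quotient.mk _ (⟨@ContinuousMap.mk _ _ _ (τ a) g' hgc,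
        fun z hz => Subtype.ext ((hg z).trans (γ.2 z hz))⟩ :
        @GenLoop (Fin (n+1)) (S a) (τ a) ⟨p, ha⟩)
    · show Quotient.map _ _ _ = _
      exact congrArg _ (Subtype.ext (ContinuousMap.ext hg))
  · intro a b ha hb x y hxy
    obtain ⟨γa, rfl⟩ := Quotient.exists_rep x
    obtain ⟨γb, rfl⟩ := Quotient.exists_rep y
    letI := τ a; letI := τ b
    simp only [homotopyGroupMap, Quotient.map_mk] at hxy
    obtain ⟨H⟩ := Quotient.exact hxy
    obtain ⟨c', g, hgc, hg⟩ := factor_through S τ hcr H.toContinuousMap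
    obtain ⟨d, had, hbd⟩ := directed_of (· ≤ ·) a b
    obtain ⟨c, hdc, hc'c⟩ := directed_of (· ≤ ·) d c'
    letI := τ c; letI := τ c'
    refine ⟨c, had.trans hdc, hbd.trans hdc, ?_⟩
    show Quotient.map _ _ _ = Quotient.map _ _ _
    apply Quotient.sound
    refine ⟨⟨⟨⟨fun z => Set.inclusion (hmono hc'c) (g z),
        (hinclab c' c hc'c).comp hgc⟩, ?_, ?_⟩, ?_⟩⟩
    · exact fun z => Subtype.ext ((hg (0, z)).trans (H.apply_zero z))
    · exact fun z => Subtype.ext ((hg (1, z)).trans (H.apply_one z))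
    · exact fun t z hz => Subtype.ext ((hg (t, z)).trans (H.prop t z hz))
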